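/- Let F(x,λ) = λ⁷ − 4λ⁶ − (20x−5)λ⁵ − (2−56x)λ⁴ + 4(32x−11)x·λ³ − 8(28x−1)x·λ² − 32(8x−3)x²·λ + 256x³, and define λ₁(x) := 1 + √(1+8x) for x ≥ 0. Then F(x, λ₁(x)) = 0 for all x ≥ 0; in particular D := λ₁(1) = 4 is a root of F(1,·) strictly exceeding the modulus of every other complex root of F(1,·). Moreover e := λ₁′(1)/D = 1/3 and v := (−λ₁′(1)² + D·λ₁″(1) + D·λ₁′(1))/D² = 2/27 > 0. -/

import Mathlib

open Set

theorem ladders_genus_parameters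
    (F : ℝ → ℝ → ℝ)
    (hF : ∀ x l : ℝ, F x l = l ^ 7 - 4 * l ^ 6 - (20 * x - 5) * l ^ 5 -
      (2 - 56 * x) * l ^ 4 + 4 * (32 * x - 11) * x * l ^ 3 -
      8 * (28 * x - 1) * x * l ^ 2 - 32 * (8 * x - 3) * x ^ 2 * l + 256 * x ^ 3)
    (Fc : ℂ → ℂ)
    (hFc : ∀ l : ℂ, Fc l = l ^ 7 - 4 * l ^ 6 - (20 - 5) * l ^ 5 -
      (2 - 56) * l ^ 4 + 4 * (32 - 11) * l ^ 3 -
      8 * (28 - 1) * l ^ 2 - 32 * (8 - 3) * l + 256)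
    (lam : ℝ → ℝ)
    (hlam : ∀ x : ℝ, lam x = 1 + Real.sqrt (1 + 8 * x)) :
    (∀ x : ℝ, 0 ≤ x → F x (lam x) = 0) ∧
    lam 1 = 4 ∧
    (∀ μ : ℂ, Fc μ = 0 → μ ≠ 4 → ‖μ‖ < 4) ∧
    deriv lam 1 / 4 = 1 / 3 ∧
    (-(deriv lam 1) ^ 2 + 4 * deriv (deriv lam) 1 + 4 * deriv lam 1) / 4 ^ 2 = 2 / 27 ∧
    0 < (2 : ℝ) / 27 := by
  have h9 : Real.sqrt 9 = 3 := by
    rw [show (9:ℝ) = 3^2 by norm_num, Real.sqrt_sq (by norm_num)]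
  have hlam1 : lam 1 = 4 := by
    rw [hlam]; norm_num [h9]
  -- derivative facts
  have hd : ∀ y : ℝ, 0 < y → HasDerivAt lam (4 / Real.sqrt (1 + 8 * y)) y := by
    intro y hy
    have h1 : (0:ℝ) < 1 + 8 * y := by linarith
    have hs : HasDerivAt Real.sqrt (1 / (2 * Real.sqrt (1 + 8 * y))) (1 + 8 * y) :=
      Real.hasDerivAt_sqrt (ne_of_gt h1)
    have hin : HasDerivAt (fun x : ℝ => 1 + 8 * x) 8 y := by
      simpa using ((hasDerivAt_id y).const_mul (8:ℝ)).const_add 1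
    have h2 : HasDerivAt (fun x : ℝ => 1 + Real.sqrt (1 + 8 * x))
        (1 / (2 * Real.sqrt (1 + 8 * y)) * 8) y := by
      simpa [Function.comp] using (hs.comp y hin).const_add (1:ℝ)
    have heq : lam = (fun x : ℝ => 1 + Real.sqrt (1 + 8 * x)) := funext hlam
    rw [heq]
    convert h2 using 1
    have hsp : Real.sqrt (1 + 8 * y) > 0 := Real.sqrt_pos.mpr h1
    field_simp
    ring
  have hderiv1 : deriv lam 1 = 4 / 3 := by
    have := (hd 1 one_pos).deriv
    rw [this]; norm_num [h9]
  -- second derivative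
  have hg : ∀ y : ℝ, 0 < y →
      HasDerivAt (fun x : ℝ => 4 / Real.sqrt (1 + 8 * x))
        (-16 / (Real.sqrt (1 + 8 * y))^3) y := by
    intro y hy
    have h1 : (0:ℝ) < 1 + 8 * y := by linarith
    have hsp : (0:ℝ) < Real.sqrt (1 + 8 * y) := Real.sqrt_pos.mpr h1
    have hs : HasDerivAt Real.sqrt (1 / (2 * Real.sqrt (1 + 8 * y))) (1 + 8 * y) :=
      Real.hasDerivAt_sqrt (ne_of_gt h1)
    have hin : HasDerivAt (fun x : ℝ => 1 + 8 * x) 8 y := by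
      simpa using ((hasDerivAt_id y).const_mul (8:ℝ)).const_add 1
    have hc := hs.comp y hin
    have hinv := hc.inv (ne_of_gt hsp)
    have h2 : HasDerivAt (fun x : ℝ => 4 / Real.sqrt (1 + 8 * x))
        (4 * -(1 / (2 * Real.sqrt (1 + 8 * y)) * 8 / Real.sqrt (1 + 8 * y) ^ 2)) y := by
      simpa [Function.comp, div_eq_mul_inv] using hinv.const_mul (4:ℝ)
    convert h2 using 1
    have hs2 : Real.sqrt (1 + 8 * y) ^ 2 = 1 + 8 * y := Real.sq_sqrt h1.le
    field_simp
    ring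
  have hderivderiv1 : deriv (deriv lam) 1 = -16 / 27 := by
    have hev : deriv lam =ᶠ[nhds 1] (fun x : ℝ => 4 / Real.sqrt (1 + 8 * x)) := by
      filter_upwards [eventually_gt_nhds (show (0:ℝ) < 1 by norm_num)] with y hy
      exact (hd y hy).deriv
    rw [Filter.EventuallyEq.deriv_eq hev, (hg 1 one_pos).deriv]
    rw [show (1:ℝ) + 8 * 1 = 9 by norm_num, h9]
    norm_num
  refine ⟨?_, hlam1, ?_, ?_, ?_, by norm_num⟩
  · intro x hx
    rw [hF, hlam]
    set s := Real.sqrt (1 + 8 * x) with hsdef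
    have hs : s ^ 2 = 1 + 8 * x := Real.sq_sqrt (by linarith)
    linear_combination (s^5 + 3*s^4 + (3 - 12*x)*s^3 + (1 - 20*x)*s^2
      + (32*x^2 - 8*x)*s) * hs
  · intro μ hμ hμ4
    have ht : ((Real.sqrt 33 : ℝ) : ℂ) ^ 2 = 33 := by
      rw [← Complex.ofReal_pow, Real.sq_sqrt (by norm_num : (0:ℝ) ≤ 33)]
      norm_num
    have hfac : Fc μ = (μ - 1) * (μ - 2) * (μ + 2)^2 * (μ - 4)
        * (μ - (1 + ((Real.sqrt 33 : ℝ) : ℂ))/2) * (μ - (1 - ((Real.sqrt 33 : ℝ) : ℂ))/2) := by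
      rw [hFc]
      linear_combination ((μ-1)*(μ-2)*(μ+2)^2*(μ-4)/4) * ht
    rw [hfac] at hμ
    have hs33 : Real.sqrt 33 < 6 := by
      nlinarith [Real.sq_sqrt (show (0:ℝ) ≤ 33 by norm_num), Real.sqrt_nonneg (33:ℝ)]
    have hs0 : (0:ℝ) ≤ Real.sqrt 33 := Real.sqrt_nonneg _
    have habs : ∀ r : ℝ, μ = (r : ℂ) → |r| < 4 → ‖μ‖ < 4 := by
      intro r hr h; rw [hr, Complex.norm_real, Real.norm_eq_abs]; exact h
    rcases mul_eq_zero.mp hμ with h | h6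
    · rcases mul_eq_zero.mp h with h | h5
      · rcases mul_eq_zero.mp h with h | h4
        · rcases mul_eq_zero.mp h with h | h3
          · rcases mul_eq_zero.mp h with h1 | h2
            · refine habs 1 (by push_cast; linear_combination h1) (by norm_num)
            · refine habs 2 (by push_cast; linear_combination h2) (by norm_num)
          · have hm : μ + 2 = 0 := by
              exact pow_eq_zero_iff (two_ne_zero) |>.mp h3
            refine habs (-2) (by push_cast; linear_combination hm) (by norm_num)
        · exact absurd (by linear_combination h4 : μ = 4) hμ4
      · refine habs ((1 + Real.sqrt 33)/2) (by push_cast; linear_combination h5) ?_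
        rw [abs_lt]; constructor <;> nlinarith
    · refine habs ((1 - Real.sqrt 33)/2) (by push_cast; linear_combination h6) ?_
      rw [abs_lt]; constructor <;> nlinarith
  · rw [hderiv1]; norm_num
  · rw [hderiv1, hderivderiv1]; norm_num
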